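/- Let ∂ be the derivation on the polynomial ring k[x_1,...,x_n] (k a commutative ring) determined by ∂(x_i) = x_i^2 for all i. Then the elementary symmetric polynomials satisfy ∂(e_m) = e_1·e_m − (m+1)·e_{m+1} for 1 ≤ m < n, and ∂(e_n) = e_1·e_n. -/

import Mathlib

open MvPolynomial Finset

private lemma key_identity {k : Type} [CommRing k] {n m : ℕ} :
    esymm (Fin n) k 1 * esymm (Fin n) k m
      = (∑ A ∈ powersetCard m (univ : Finset (Fin n)), (∑ i ∈ A, X i) * ∏ j ∈ A, X j)
        + ((m : MvPolynomial (Fin n) k) + 1) * esymm (Fin n) k (m + 1) := by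
  have step : ∑ A ∈ powersetCard m (univ : Finset (Fin n)), ∑ i ∈ Aᶜ, X i * ∏ j ∈ A, X (R := k) j
      = ∑ B ∈ powersetCard (m+1) (univ : Finset (Fin n)), ∑ i ∈ B, X i * ∏ j ∈ B.erase i, X j := by
    rw [Finset.sum_sigma', Finset.sum_sigma']
    apply Finset.sum_nbij' (fun p => (⟨insert p.2 p.1, p.2⟩ : Σ _ : Finset (Fin n), Fin n))
      (fun p => ⟨p.1.erase p.2, p.2⟩)
    · rintro ⟨A, i⟩ h
      simp only [mem_sigma, mem_powersetCard_univ, mem_compl] at h ⊢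
      exact ⟨by rw [card_insert_of_notMem h.2, h.1], mem_insert_self _ _⟩
    · rintro ⟨B, i⟩ h
      simp only [mem_sigma, mem_powersetCard_univ, mem_compl] at h ⊢
      exact ⟨by rw [card_erase_of_mem h.2, h.1]; rfl, notMem_erase _ _⟩
    · rintro ⟨A, i⟩ h
      simp only [mem_sigma, mem_powersetCard_univ, mem_compl] at h
      simp [Finset.erase_insert h.2]
    · rintro ⟨B, i⟩ h
      simp only [mem_sigma, mem_powersetCard_univ] at h
      simp [Finset.insert_erase h.2]
    · rintro ⟨A, i⟩ h
      simp only [mem_sigma, mem_powersetCard_univ, mem_compl] at h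
      simp [Finset.erase_insert h.2]
  have rhs2 : ∑ B ∈ powersetCard (m+1) (univ : Finset (Fin n)), ∑ i ∈ B, X i * ∏ j ∈ B.erase i, X (R := k) j
      = ((m : MvPolynomial (Fin n) k) + 1) * esymm (Fin n) k (m + 1) := by
    rw [esymm, Finset.mul_sum]
    apply Finset.sum_congr rfl
    intro B hB
    rw [mem_powersetCard_univ] at hB
    have : ∀ i ∈ B, X i * ∏ j ∈ B.erase i, X (R := k) j = ∏ j ∈ B, X j := by
      intro i hi
      rw [← Finset.mul_prod_erase B _ hi]
    rw [Finset.sum_congr rfl this, Finset.sum_const, hB, nsmul_eq_mul]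
    push_cast
    ring
  rw [esymm_one, esymm, Finset.mul_sum]
  have split : ∀ A ∈ powersetCard m (univ : Finset (Fin n)),
      (∑ i, X i) * ∏ j ∈ A, X (R := k) j
        = (∑ i ∈ A, X i) * ∏ j ∈ A, X j + ∑ i ∈ Aᶜ, X i * ∏ j ∈ A, X j := by
    intro A _
    rw [← Finset.sum_add_sum_compl A (fun i => X (R := k) i), add_mul]
    simp [Finset.sum_mul]
  rw [Finset.sum_congr rfl split, Finset.sum_add_distrib, step, rhs2]

/-- Let `∂` be the derivation of `k[x_1,…,x_n]` with `∂(x_i) = x_i^2`.  Then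
`∂(e_m) = e_1·e_m - (m+1)·e_{m+1}` for `1 ≤ m < n`, and `∂(e_n) = e_1·e_n`. -/
theorem stmt13 {k : Type} [CommRing k] {n : ℕ}
    (D : Module.End k (MvPolynomial (Fin n) k))
    (hleib : ∀ f g : MvPolynomial (Fin n) k, D (f * g) = D f * g + f * D g)
    (hX : ∀ i : Fin n, D (X i) = X i ^ 2) :
    (∀ m : ℕ, 1 ≤ m → m < n →
        D (esymm (Fin n) k m) =
          esymm (Fin n) k 1 * esymm (Fin n) k m
            - ((m : MvPolynomial (Fin n) k) + 1) * esymm (Fin n) k (m + 1)) ∧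
      D (esymm (Fin n) k n) = esymm (Fin n) k 1 * esymm (Fin n) k n := by
  have hone : D 1 = 0 := by
    have h := hleib 1 1
    simp only [mul_one, one_mul] at h
    exact left_eq_add.mp h
  have hprod : ∀ s : Finset (Fin n),
      D (∏ i ∈ s, X i) = (∑ i ∈ s, X i) * ∏ i ∈ s, X i := by
    intro s
    induction s using Finset.cons_induction with
    | empty => simpa using hone
    | cons i s hi ih =>
      rw [Finset.prod_cons, Finset.sum_cons, hleib, hX, ih]
      ring
  have hD : ∀ m : ℕ, D (esymm (Fin n) k m)
      = ∑ A ∈ powersetCard m (univ : Finset (Fin n)), (∑ i ∈ A, X i) * ∏ j ∈ A, X j := by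
    intro m
    rw [esymm, map_sum]
    exact Finset.sum_congr rfl fun A _ => hprod A
  constructor
  · intro m _ _
    rw [hD m, key_identity]
    ring
  · have hzero : esymm (Fin n) k (n + 1) = 0 := by
      rw [esymm, Finset.powersetCard_eq_empty.2 (by simp), Finset.sum_empty]
    have := key_identity (k := k) (n := n) (m := n)
    rw [hzero, mul_zero, add_zero] at this
    rw [hD n, this]
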